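/- Let k be a number field, let k_v be the completion of k at a nonarchimedean place v with valuation ring O_v, and let O = k ∩ O_v be the valuation subring of k determined by v. Let m ∈ ℤ_{>0} and suppose c ∈ k^× satisfies 1 + c·O_v ⊆ k_v^{×m}. Then k_v^{×m} ∩ k = (1 + c·O)·k^{×m}, i.e., a nonzero element t of k is an m-th power in k_v if and only if t = (1 + c·u)·s^m for some u ∈ O and s ∈ k^×. -/

import Mathlib

open IsDedekindDomain
open scoped Multiplicative

/-- Let `k` be a number field, `v` a nonarchimedean place with completion `k_v` and valuation
ring `O_v`, and let `O = k ∩ O_v`. Let `m ∈ ℤ_{>0}` and suppose `c ∈ k^×` satisfies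
`1 + c·O_v ⊆ k_v^{×m}`. Then `k_v^{×m} ∩ k = (1 + c·O)·k^{×m}`. -/
theorem mth_powers_in_completion_eq (k : Type*) [Field k] [NumberField k]
    (v : HeightOneSpectrum (NumberField.RingOfIntegers k)) (m : ℕ) (hm : 0 < m)
    (c : k) (hc : c ≠ 0)
    (hsub : ∀ u : v.adicCompletion k, u ∈ v.adicCompletionIntegers k →
      ∃ a : v.adicCompletion k, a ≠ 0 ∧
        a ^ m = 1 + algebraMap k (v.adicCompletion k) c * u) :
    {t : k | ∃ a : v.adicCompletion k, a ≠ 0 ∧ a ^ m = algebraMap k (v.adicCompletion k) t}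
      = {t : k | ∃ u s : k,
          algebraMap k (v.adicCompletion k) u ∈ v.adicCompletionIntegers k ∧ s ≠ 0 ∧
          t = (1 + c * u) * s ^ m} := by
  set K := v.adicCompletion k with hK
  set φ := algebraMap k K with hφ
  have hφinj : Function.Injective φ := (algebraMap k K).injective
  let V : Valuation K (WithZero (Multiplicative ℤ)) := Valued.v
  ext t
  simp only [Set.mem_setOf_eq]
  constructor
  · rintro ⟨a, ha, ha'⟩
    have ht : t ≠ 0 := by
      rintro rfl
      rw [map_zero] at ha'
      exact ha (pow_eq_zero_iff hm.ne' |>.mp ha')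
    have hva : V a ≠ 0 := V.ne_zero_iff.mpr ha
    have hvc : V (φ c) ≠ 0 := V.ne_zero_iff.mpr ((map_ne_zero φ).mpr hc)
    have hγ : min (V a) (V (φ c) * V a) ≠ 0 :=
      (lt_min (zero_lt_iff.mpr hva) (zero_lt_iff.mpr (mul_ne_zero hvc hva))).ne'
    have hdense : DenseRange φ := by
      exact HeightOneSpectrum.denseRange_algebraMap (K := k) (v := v)
    have hnhds : {y : K | V (y - a) < Units.mk0 _ hγ} ∈ nhds a := by
      rw [Valued.mem_nhds]
      have h' : min (Valued.v.restrict a) (Valued.v.restrict (φ c * a)) ≠ 0 :=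
        (lt_min ((V.restrict_pos_iff a).mpr (zero_lt_iff.mpr hva))
          ((V.restrict_pos_iff (φ c * a)).mpr
            (zero_lt_iff.mpr (by rw [map_mul]; exact mul_ne_zero hvc hva)))).ne'
      refine ⟨Units.mk0 _ h', fun y hy => ?_⟩
      simp only [Set.mem_setOf_eq, Units.val_mk0, lt_min_iff] at hy
      show V (y - a) < min (V a) (V (φ c) * V a)
      rw [lt_min_iff]
      exact ⟨V.restrict_lt_iff.mp hy.1, by rw [← map_mul]; exact V.restrict_lt_iff.mp hy.2⟩
    obtain ⟨y, hy1, hy2⟩ := mem_closure_iff_nhds.mp (hdense a) _ hnhds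
    obtain ⟨s, rfl⟩ := hy2
    have hy1' : V (φ s - a) < min (V a) (V (φ c) * V a) := hy1
    have hlt1 : V (φ s - a) < V a := lt_of_lt_of_le hy1' (min_le_left _ _)
    have hlt2 : V (φ s - a) < V (φ c) * V a := lt_of_lt_of_le hy1' (min_le_right _ _)
    have hvs : V (φ s) = V a := by
      have := V.map_add_eq_of_lt_right (x := φ s - a) (y := a) hlt1
      simpa using this
    have hs0 : s ≠ 0 := by
      rintro rfl
      rw [map_zero, map_zero] at hvs
      exact hva hvs.symm
    refine ⟨(t - s ^ m) / (c * s ^ m), s, ?_, hs0, by field_simp; ring⟩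
    rw [HeightOneSpectrum.mem_adicCompletionIntegers]
    have hnum : V (φ t - φ s ^ m) ≤ V (φ c) * V (φ s) ^ m := by
      have hfac : (∑ i ∈ Finset.range m, a ^ i * (φ s) ^ (m - 1 - i)) * (a - φ s)
          = a ^ m - (φ s) ^ m := geom_sum₂_mul a (φ s) m
      have hsum : V (∑ i ∈ Finset.range m, a ^ i * (φ s) ^ (m - 1 - i)) ≤ V a ^ (m - 1) := by
        apply Valuation.map_sum_le
        intro i hi
        have him := Finset.mem_range.mp hi
        rw [V.map_mul, V.map_pow, V.map_pow, hvs, ← pow_add]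
        have : i + (m - 1 - i) = m - 1 := by omega
        rw [this]
      calc V (φ t - φ s ^ m) = V (∑ i ∈ Finset.range m, a ^ i * (φ s) ^ (m - 1 - i))
              * V (a - φ s) := by rw [← V.map_mul, hfac, ha']
        _ ≤ V a ^ (m - 1) * (V (φ c) * V a) := by
            refine mul_le_mul' hsum ?_
            rw [V.map_sub_swap]
            exact hlt2.le
        _ = V (φ c) * V (φ s) ^ m := by
            rw [hvs, ← mul_assoc, mul_comm (V a ^ (m - 1)) (V (φ c)), mul_assoc,
              ← pow_succ]
            congr 2
            omega
    have hden : V (φ c * φ s ^ m) ≠ 0 := by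
      rw [V.map_mul, V.map_pow]
      exact mul_ne_zero hvc (pow_ne_zero _ (hvs ▸ hva))
    have key : φ ((t - s ^ m) / (c * s ^ m)) * (φ c * φ s ^ m) = φ t - φ s ^ m := by
      rw [← map_pow, ← map_mul, ← map_mul, ← map_sub]
      congr 1
      field_simp
    have : V (φ ((t - s ^ m) / (c * s ^ m))) * V (φ c * φ s ^ m)
        ≤ 1 * V (φ c * φ s ^ m) := by
      rw [← V.map_mul, key, one_mul, V.map_mul, V.map_pow]
      exact hnum
    exact le_of_mul_le_mul_right this (zero_lt_iff.mpr hden)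
  · rintro ⟨u, s, hu, hs, rfl⟩
    obtain ⟨a, ha, ha'⟩ := hsub (φ u) hu
    refine ⟨a * φ s, mul_ne_zero ha ((map_ne_zero φ).mpr hs), ?_⟩
    rw [mul_pow, ha', map_mul, map_pow, map_add, map_one, map_mul]
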